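/- If A ∈ SL₂(ℤ) satisfies tr(A) = 2 and A ≠ I, then there exist P ∈ GL₂(ℤ) and a nonzero integer k such that P·A·P⁻¹ = [[1, 0], [k, 1]]. -/

import Mathlib

private theorem SL2Z_conj_aux (A : Matrix (Fin 2) (Fin 2) ℤ) (a b c p q r s : ℤ)
    (hAeq : A = !![1 + a, b; c, 1 - a])
    (hpa : p * a + q * c = 0) (hpb : p * b - q * a = 0)
    (hbez : p * s - q * r = 1) (hA : A ≠ 1) :
    ∃ P Q : Matrix (Fin 2) (Fin 2) ℤ, P * Q = 1 ∧ Q * P = 1 ∧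
      ∃ k : ℤ, k ≠ 0 ∧ P * A * Q = !![1, 0; k, 1] := by
  have hPQ : !![p, q; r, s] * !![s, -q; -r, p] = 1 := by
    ext i j
    fin_cases i <;> fin_cases j <;>
      simp [Matrix.mul_apply, Fin.sum_univ_two, Matrix.one_apply] <;> linarith [hbez]
  have hQP : !![s, -q; -r, p] * !![p, q; r, s] = 1 := by
    ext i j
    fin_cases i <;> fin_cases j <;>
      simp [Matrix.mul_apply, Fin.sum_univ_two, Matrix.one_apply] <;> linarith [hbez]
  have hPAQ : !![p, q; r, s] * A * !![s, -q; -r, p]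
      = !![1, 0; 2 * a * r * s + c * s * s - b * r * r, 1] := by
    subst hAeq
    ext i j
    fin_cases i <;> fin_cases j <;>
      simp [Matrix.mul_apply, Fin.sum_univ_two] <;>
    first
      | linear_combination s * hpa - r * hpb + hbez
      | linear_combination r * hpb - s * hpa + hbez
      | linear_combination (-q) * hpa + p * hpb
      | linear_combination q * hpa - p * hpb
      | ring
  refine ⟨!![p, q; r, s], !![s, -q; -r, p], hPQ, hQP,
    2 * a * r * s + c * s * s - b * r * r, ?_, hPAQ⟩
  intro hk0
  apply hA
  have h1 : !![p, q; r, s] * A * !![s, -q; -r, p] = 1 := by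
    rw [hPAQ, hk0, Matrix.one_fin_two]
  calc A = 1 * A * 1 := by rw [one_mul, mul_one]
    _ = (!![s, -q; -r, p] * !![p, q; r, s]) * A * (!![s, -q; -r, p] * !![p, q; r, s]) := by
        rw [hQP]
    _ = !![s, -q; -r, p] * (!![p, q; r, s] * A * !![s, -q; -r, p]) * !![p, q; r, s] := by
        simp only [mul_assoc]
    _ = 1 := by rw [h1, mul_one, hQP]

/-- A parabolic element of `SL₂(ℤ)` with trace `2`, other than the identity, is
conjugate in `GL₂(ℤ)` to a lower-triangular unipotent matrix `[[1,0],[k,1]]`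
with `k ≠ 0`. -/
theorem SL2Z_trace_two_conjugate (A : Matrix (Fin 2) (Fin 2) ℤ)
    (hdet : A.det = 1) (htr : Matrix.trace A = 2) (hA : A ≠ 1) :
    ∃ P Q : Matrix (Fin 2) (Fin 2) ℤ, P * Q = 1 ∧ Q * P = 1 ∧
      ∃ k : ℤ, k ≠ 0 ∧ P * A * Q = !![1, 0; k, 1] := by
  rw [Matrix.trace_fin_two] at htr
  rw [Matrix.det_fin_two] at hdet
  set a : ℤ := A 0 0 - 1 with ha
  set b : ℤ := A 0 1 with hb
  set c : ℤ := A 1 0 with hc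
  have h00 : A 0 0 = 1 + a := by linarith [ha]
  have hA11 : A 1 1 = 1 - a := by linarith [ha, htr, h00]
  have hAeq : A = !![1 + a, b; c, 1 - a] := by
    rw [Matrix.eta_fin_two A, hA11, h00]
  have hkey : a * a + b * c = 0 := by
    linear_combination (-1 : ℤ) * hdet + A 1 1 * h00 + (1 + a) * hA11
  by_cases hcz : c = 0
  · -- then a = 0 and b ≠ 0
    have ha0 : a = 0 := by
      have h2 : a * a = 0 := by rw [hcz] at hkey; linarith
      exact mul_self_eq_zero.mp h2
    exact SL2Z_conj_aux A a b c 0 1 (-1) 0 hAeq (by rw [hcz]; ring) (by rw [ha0]; ring)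
      (by ring) hA
  · -- c ≠ 0 : build primitive kernel row vector via gcd
    have hgpos : 0 < Int.gcd a c := Int.gcd_pos_of_ne_zero_right a hcz
    set g : ℤ := (Int.gcd a c : ℤ) with hg
    have hgne : g ≠ 0 := by positivity
    obtain ⟨a', ha'⟩ : g ∣ a := Int.gcd_dvd_left a c
    obtain ⟨c', hc'⟩ : g ∣ c := Int.gcd_dvd_right a c
    have hacop : Int.gcd a' c' = 1 := by
      have h := Int.gcd_div_gcd_div_gcd (i := a) (j := c) hgpos
      rwa [← hg, ha', hc', Int.mul_ediv_cancel_left _ hgne,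
        Int.mul_ediv_cancel_left _ hgne] at h
    have hcop2 : Int.gcd c' (-a') = 1 := by
      rw [Int.gcd]
      rw [Int.gcd] at hacop
      simpa [Int.natAbs_neg, Nat.gcd_comm] using hacop
    have hbez : c' * Int.gcdA c' (-a') + (-a') * Int.gcdB c' (-a') = 1 := by
      have h := Int.gcd_eq_gcd_ab c' (-a')
      rw [hcop2] at h
      push_cast at h
      linarith
    have hpa : c' * a + (-a') * c = 0 := by rw [ha', hc']; ring
    have hpb : c' * b - (-a') * a = 0 := by
      have h0 : g * (a' * a + b * c') = 0 := by
        nth_rewrite 1 [ha'] at hkey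
        rw [hc'] at hkey
        linear_combination hkey
      have h1 := (mul_eq_zero.mp h0).resolve_left hgne
      linarith
    exact SL2Z_conj_aux A a b c c' (-a') (-(Int.gcdB c' (-a'))) (Int.gcdA c' (-a')) hAeq
      hpa hpb (by linarith [hbez]) hA
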